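/- Let (M, μ) be a probability measure space, let 1 < p < q be reals, h < 0, and η₀ > 0. Let g : M → ℝ be integrable with g ≥ 0 a.e. and F = ∫ g dμ > 0. Let u : M → ℝ be measurable with ∫ |u|^q dμ = k, where k ≥ (q|h|/(η₀F))^(q/(q−p)), and assume ∫ g·|u|^q dμ ≥ η₀·k·F. Then (h/p)·∫ |u|^p dμ + (1/q)·∫ g·|u|^q dμ ≥ ((p−1)|h|/p)·k^(p/q). -/

import Mathlib

open MeasureTheory Real

theorem aux_holder {M : Type*} [MeasurableSpace M] (μ : Measure M) [IsProbabilityMeasure μ]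
    (p q k : ℝ) (hp : 0 < p) (hpq : p < q) (hk0 : 0 < k) (u : M → ℝ) (hu : Measurable u)
    (hk : ∫ x, |u x| ^ q ∂μ = k) :
    ∫ x, |u x| ^ p ∂μ ≤ k ^ (p / q) := by
  have hq : 0 < q := hp.trans hpq
  set r : ℝ := q / p with hr
  have hr1 : 1 < r := (one_lt_div hp).2 hpq
  have hconj : r.HolderConjugate (Real.conjExponent r) := Real.HolderConjugate.conjExponent hr1
  set f : M → ENNReal := fun x => ENNReal.ofReal (|u x| ^ p) with hf
  have hfm : AEMeasurable f μ := (ENNReal.measurable_ofReal.comp ((hu.abs).pow_const p)).aemeasurable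
  have hfr : ∀ x, (f x) ^ r = ENNReal.ofReal (|u x| ^ q) := by
    intro x
    simp only [hf]
    rw [ENNReal.ofReal_rpow_of_nonneg (by positivity) (le_of_lt (lt_trans zero_lt_one hr1)),
      ← Real.rpow_mul (abs_nonneg _), hr, mul_div_cancel₀ q hp.ne']
  have hqint : Integrable (fun x => |u x| ^ q) μ := by
    by_contra hni
    rw [integral_undef hni] at hk
    exact hk0.ne' hk.symm
  have hL : ∫⁻ x, ENNReal.ofReal (|u x| ^ q) ∂μ = ENNReal.ofReal k := by
    rw [← ofReal_integral_eq_lintegral_ofReal hqint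
      (Filter.Eventually.of_forall fun x => by positivity), hk]
  have key : ∫⁻ x, f x ∂μ ≤ (ENNReal.ofReal k) ^ (1 / r) := by
    have h2 := ENNReal.lintegral_mul_le_Lp_mul_Lq μ hconj hfm aemeasurable_const
      (g := fun _ => (1:ENNReal))
    simp only [mul_one, ENNReal.one_rpow, lintegral_const, measure_univ] at h2
    calc ∫⁻ x, f x ∂μ ≤ (∫⁻ x, (f x) ^ r ∂μ) ^ (1 / r) * 1 := by simpa using h2
      _ = (ENNReal.ofReal k) ^ (1 / r) := by
          simp only [hfr, mul_one, hL]
  have hkey2 : (ENNReal.ofReal k) ^ (1 / r) = ENNReal.ofReal (k ^ (p / q)) := by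
    rw [← ENNReal.ofReal_rpow_of_pos hk0]
    congr 1
    rw [hr, one_div_div]
  rw [integral_eq_lintegral_of_nonneg_ae (Filter.Eventually.of_forall fun x => by positivity)
    ((hu.abs.pow_const p).aestronglyMeasurable)]
  rw [hkey2] at key
  exact ENNReal.toReal_le_of_le_ofReal (by positivity) key

theorem stmt6 {M : Type*} [MeasurableSpace M] (μ : Measure M) [IsProbabilityMeasure μ]
    (p q h η₀ F k : ℝ) (hp : 1 < p) (hpq : p < q) (hh : h < 0) (hη : 0 < η₀)
    (g u : M → ℝ) (hg : Integrable g μ) (hgnonneg : ∀ᵐ x ∂μ, 0 ≤ g x)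
    (hF : F = ∫ x, g x ∂μ) (hFpos : 0 < F)
    (hu : Measurable u) (hk : ∫ x, |u x| ^ q ∂μ = k)
    (hklarge : (q * |h| / (η₀ * F)) ^ (q / (q - p)) ≤ k)
    (hgu : ∫ x, g x * |u x| ^ q ∂μ ≥ η₀ * k * F) :
    h / p * ∫ x, |u x| ^ p ∂μ + (1 / q) * ∫ x, g x * |u x| ^ q ∂μ
      ≥ (p - 1) * |h| / p * k ^ (p / q) := by
  have hp0 : (0:ℝ) < p := lt_trans zero_lt_one hp
  have hq0 : (0:ℝ) < q := hp0.trans hpq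
  have habs : 0 < |h| := abs_pos.2 hh.ne
  have hbase : 0 < q * |h| / (η₀ * F) := by positivity
  have hk0 : 0 < k := lt_of_lt_of_le (Real.rpow_pos_of_pos hbase _) hklarge
  set K : ℝ := k ^ (p / q) with hK
  have hK0 : 0 < K := Real.rpow_pos_of_pos hk0 _
  have hIp : ∫ x, |u x| ^ p ∂μ ≤ K := aux_holder μ p q k hp0 hpq hk0 u hu hk
  -- from hklarge : η₀ * F * k ^ ((q-p)/q) ≥ q * |h|
  have hqp : 0 < q - p := sub_pos.2 hpq
  have hstep : q * |h| ≤ η₀ * F * k ^ ((q - p) / q) := by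
    have he : 0 ≤ (q - p) / q := by positivity
    have h1 := Real.rpow_le_rpow (le_of_lt (Real.rpow_pos_of_pos hbase _)) hklarge he
    rw [← Real.rpow_mul hbase.le, div_mul_div_comm, mul_comm (q - p) q,
      div_self (by positivity : q * (q - p) ≠ 0), Real.rpow_one] at h1
    calc q * |h| = (q * |h| / (η₀ * F)) * (η₀ * F) :=
          (div_mul_cancel₀ _ (by positivity)).symm
      _ ≤ k ^ ((q - p) / q) * (η₀ * F) :=
          mul_le_mul_of_nonneg_right h1 (by positivity)
      _ = η₀ * F * k ^ ((q - p) / q) := by ring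
  have hsplit : k ^ ((q - p) / q) * K = k := by
    rw [hK, ← Real.rpow_add hk0]
    have : (q - p) / q + p / q = 1 := by field_simp; ring
    rw [this, Real.rpow_one]
  have hstep2 : q * |h| * K ≤ η₀ * k * F := by
    calc q * |h| * K ≤ η₀ * F * k ^ ((q - p) / q) * K :=
          mul_le_mul_of_nonneg_right hstep hK0.le
      _ = η₀ * F * (k ^ ((q - p) / q) * K) := by ring
      _ = η₀ * k * F := by rw [hsplit]; ring
  have e2 : |h| * K ≤ (1 / q) * ∫ x, g x * |u x| ^ q ∂μ := by
    have : q * |h| * K ≤ ∫ x, g x * |u x| ^ q ∂μ := le_trans hstep2 hgu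
    calc |h| * K = (1 / q) * (q * |h| * K) := by
          field_simp
      _ ≤ (1 / q) * ∫ x, g x * |u x| ^ q ∂μ :=
          mul_le_mul_of_nonneg_left this (by positivity)
  have e1 : h / p * K ≤ h / p * ∫ x, |u x| ^ p ∂μ :=
    mul_le_mul_of_nonpos_left hIp (by
      apply div_nonpos_of_nonpos_of_nonneg hh.le hp0.le)
  have hid : (p - 1) * |h| / p * K = |h| * K + h / p * K := by
    rw [abs_of_neg hh]; field_simp; ring
  rw [ge_iff_le, hid]
  linarith
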